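/- arXiv:2112.08756 — 4 statements merged into one kernel-verified Lean document; each statement's English description precedes it below -/
import Mathlib

section
/- Let N ≥ 2 and c ∈ [0,1]. Then the minimum of (∏_{i=1}^N η_i)^{1/N} over all η ∈ [0,1]^N satisfying (1/N) Σ_{i=1}^N (1 − η_i) = c equals max(1 − Nc, 0)^{1/N}. Moreover, if 0 ≤ c < 1/N, then η attains this minimum if and only if there is an index i with η_i = 1 − Nc and η_j = 1 for all j ≠ i. -/
lemma weier {ι : Type*} (s : Finset ι) (η : ι → ℝ)
    (h : ∀ i ∈ s, η i ∈ Set.Icc (0:ℝ) 1) :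
    1 - ∑ i ∈ s, (1 - η i) ≤ ∏ i ∈ s, η i := by
  induction s using Finset.cons_induction with
  | empty => simp
  | cons a s ha ih =>
    rw [Finset.prod_cons, Finset.sum_cons]
    have hmem := h a (Finset.mem_cons_self a s)
    have ih' := ih (fun i hi => h i (Finset.mem_cons_of_mem hi))
    have hT : 0 ≤ ∑ i ∈ s, (1 - η i) := by
      apply Finset.sum_nonneg
      intro i hi
      have := (h i (Finset.mem_cons_of_mem hi)).2
      linarith
    nlinarith [hmem.1, hmem.2]

lemma weier_strict {ι : Type*} [DecidableEq ι] (s : Finset ι) (η : ι → ℝ)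
    (h : ∀ i ∈ s, η i ∈ Set.Icc (0:ℝ) 1) (hsum : ∑ i ∈ s, (1 - η i) < 1)
    (j k : ι) (hj : j ∈ s) (hk : k ∈ s) (hjk : j ≠ k)
    (hj1 : η j ≠ 1) (hk1 : η k ≠ 1) :
    1 - ∑ i ∈ s, (1 - η i) < ∏ i ∈ s, η i := by
  have hk' : k ∈ s.erase j := Finset.mem_erase.2 ⟨Ne.symm hjk, hk⟩
  have hprod : ∏ i ∈ s, η i = η j * (η k * ∏ i ∈ (s.erase j).erase k, η i) := by
    rw [Finset.mul_prod_erase _ _ hk', Finset.mul_prod_erase _ _ hj]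
  have e1 : (1 - η j) + ∑ i ∈ s.erase j, (1 - η i) = ∑ i ∈ s, (1 - η i) :=
    Finset.add_sum_erase s (fun i => 1 - η i) hj
  have e2 : (1 - η k) + ∑ i ∈ (s.erase j).erase k, (1 - η i)
      = ∑ i ∈ s.erase j, (1 - η i) :=
    Finset.add_sum_erase (s.erase j) (fun i => 1 - η i) hk'
  have hsum' : ∑ i ∈ s, (1 - η i)
      = (1 - η j) + ((1 - η k) + ∑ i ∈ (s.erase j).erase k, (1 - η i)) := by
    rw [← e1, ← e2]
  set t := (s.erase j).erase k with ht
  have hmemt : ∀ i ∈ t, η i ∈ Set.Icc (0:ℝ) 1 := fun i hi =>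
    h i (Finset.mem_of_mem_erase (Finset.mem_of_mem_erase hi))
  have hP := weier t η hmemt
  have hT : 0 ≤ ∑ i ∈ t, (1 - η i) := Finset.sum_nonneg fun i hi => by
    have := (hmemt i hi).2; linarith
  have haj := h j hj
  have hak := h k hk
  have ha : 0 < 1 - η j := lt_of_le_of_ne (by linarith [haj.2]) (by intro e; exact hj1 (by linarith))
  have hb : 0 < 1 - η k := lt_of_le_of_ne (by linarith [hak.2]) (by intro e; exact hk1 (by linarith))
  rw [hsum'] at hsum
  have hA : 0 < η j := by linarith
  have hB : 0 < η k := by linarith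
  have hAB1 : η j * η k ≤ 1 := mul_le_one₀ haj.2 hB.le hak.2
  rw [hprod, hsum']
  nlinarith [mul_pos ha hb,
    mul_le_mul_of_nonneg_left hP (mul_nonneg hA.le hB.le),
    mul_nonneg hT (sub_nonneg.2 hAB1)]

lemma exists_eta : ∀ (N : ℕ) (s : ℝ), 0 ≤ s → s ≤ N →
    ∃ η : Fin N → ℝ, (∀ i, η i ∈ Set.Icc (0:ℝ) 1) ∧
      ∑ i, (1 - η i) = s ∧ ∏ i, η i = max (1 - s) 0 := by
  intro N
  induction N with
  | zero =>
    intro s h0 h1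
    have hs : s = 0 := le_antisymm (by simpa using h1) h0
    exact ⟨fun i => 1, by simp, by simp [hs], by simp [hs]⟩
  | succ n ih =>
    intro s h0 h1
    by_cases h : s ≤ 1
    · refine ⟨Fin.cons (1 - s) (fun _ => 1), ?_, ?_, ?_⟩
      · intro i
        refine Fin.cases ?_ ?_ i
        · constructor
          · simpa using by linarith
          · simpa using by linarith
        · intro j; simp
      · rw [Fin.sum_univ_succ]; simp
      · rw [Fin.prod_univ_succ]; simp [max_eq_left (by linarith : (0:ℝ) ≤ 1 - s)]
    · push_neg at h
      obtain ⟨η, hmem, hsum, hprod⟩ := ih (s - 1) (by linarith) (by push_cast [Nat.cast_succ] at h1 ⊢; linarith)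
      refine ⟨Fin.cons 0 η, ?_, ?_, ?_⟩
      · intro i
        refine Fin.cases ?_ ?_ i
        · simp
        · exact hmem
      · rw [Fin.sum_univ_succ]; simp only [Fin.cons_zero, Fin.cons_succ]; rw [hsum]; ring
      · rw [Fin.prod_univ_succ]; simp only [Fin.cons_zero, Fin.cons_succ]; rw [max_eq_right (by linarith : 1 - s ≤ 0)]; ring

/-- For the fully asymmetric circle model with `N` equal groups, the minimum of the
effective reproduction number `(∏ i, η i) ^ (1/N)` over all strategies `η ∈ [0,1]^N`
of cost `c = (1/N) ∑ i (1 - η i)` equals `max (1 - N c) 0 ^ (1/N)`; moreover, for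
`0 ≤ c < 1/N`, the minimizers are exactly the strategies giving all the vaccine to a
single group. -/
theorem stmt1 (N : ℕ) (hN : 2 ≤ N) (c : ℝ) (hc : c ∈ Set.Icc (0 : ℝ) 1) :
    IsLeast
      {r : ℝ | ∃ η : Fin N → ℝ, (∀ i, η i ∈ Set.Icc (0 : ℝ) 1) ∧
        (1 / N : ℝ) * ∑ i, (1 - η i) = c ∧ r = (∏ i, η i) ^ ((1 : ℝ) / N)}
      (max (1 - N * c) 0 ^ ((1 : ℝ) / N)) ∧
    (c < 1 / N →
      ∀ η : Fin N → ℝ, (∀ i, η i ∈ Set.Icc (0 : ℝ) 1) →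
        (1 / N : ℝ) * ∑ i, (1 - η i) = c →
        ((∏ i, η i) ^ ((1 : ℝ) / N) = max (1 - N * c) 0 ^ ((1 : ℝ) / N) ↔
          ∃ i, η i = 1 - N * c ∧ ∀ j, j ≠ i → η j = 1)) := by
  have hNpos : (0:ℝ) < N := by exact_mod_cast (by omega : 0 < N)
  have hNne : (N:ℝ) ≠ 0 := ne_of_gt hNpos
  -- convert cost constraint to sum form
  have key : ∀ η : Fin N → ℝ, (1 / N : ℝ) * ∑ i, (1 - η i) = c →
      ∑ i, (1 - η i) = N * c := by
    intro η h
    have h2 : (N:ℝ) * ((1/N) * ∑ i, (1 - η i)) = N * c := by rw [h]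
    rwa [← mul_assoc, mul_one_div_cancel hNne, one_mul] at h2
  constructor
  · constructor
    · obtain ⟨η, hmem, hsum, hprod⟩ := exists_eta N (N * c)
        (mul_nonneg (le_of_lt hNpos) hc.1)
        (by nlinarith [hc.2])
      exact ⟨η, hmem, by rw [hsum]; field_simp, by rw [hprod]⟩
    · rintro r ⟨η, hmem, hcost, hr⟩
      have hS := key η hcost
      have h1 : 1 - N * c ≤ ∏ i, η i := by
        have := weier Finset.univ η (fun i _ => hmem i)
        rw [hS] at this
        linarith
      have h0 : (0:ℝ) ≤ ∏ i, η i :=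
        Finset.prod_nonneg fun i _ => (hmem i).1
      rw [hr]
      exact Real.rpow_le_rpow (le_max_right _ _) (max_le h1 h0) (by positivity)
  · intro hc2 η hmem hcost
    have hS := key η hcost
    have hNc : N * c < 1 := by
      rw [lt_div_iff₀ hNpos] at hc2
      linarith
    have hmax : max (1 - N * c) 0 = 1 - N * c := max_eq_left (by linarith)
    have h0 : (0:ℝ) ≤ ∏ i, η i := Finset.prod_nonneg fun i _ => (hmem i).1
    constructor
    · intro heq
      have hprod : ∏ i, η i = max (1 - N * c) 0 :=
        Real.rpow_left_injOn (by positivity) h0 (le_max_right (1 - N * c) 0) heq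
      rw [hmax] at hprod
      by_cases hall : ∀ j, η j = 1
      · have hc0 : N * c = 0 := by
          rw [← hS]
          exact Finset.sum_eq_zero fun i _ => by rw [hall i]; ring
        refine ⟨⟨0, by omega⟩, by rw [hall, hc0]; ring, fun j _ => hall j⟩
      · push_neg at hall
        obtain ⟨i, hi⟩ := hall
        have hothers : ∀ j, j ≠ i → η j = 1 := by
          intro j hji
          by_contra hj1
          have := weier_strict Finset.univ η (fun i _ => hmem i)
            (by rw [hS]; exact hNc) j i (Finset.mem_univ _) (Finset.mem_univ _)
            hji hj1 hi
          rw [hS, hprod] at this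
          linarith
        have hsum1 : ∑ j, (1 - η j) = 1 - η i :=
          Finset.sum_eq_single i (fun j _ hj => by rw [hothers j hj]; ring)
            (fun h => absurd (Finset.mem_univ i) h)
        rw [hsum1] at hS
        exact ⟨i, by linarith, hothers⟩
    · rintro ⟨i, hi, hothers⟩
      have hprod : ∏ j, η j = 1 - N * c := by
        rw [Finset.prod_eq_single i (fun j _ hj => hothers j hj)
          (fun h => absurd (Finset.mem_univ i) h)]
        exact hi
      rw [hprod, hmax]
end

section
/- Let N ≥ 3 and let K be the N × N adjacency matrix of the cycle: K_{ij} = 1 if j ≡ i ± 1 (mod N) and K_{ij} = 0 otherwise. (a) If η ∈ [0,1]^N satisfies Σ_{i=1}^N (1 − η_i) < ⌈N/2⌉, then the spectral radius of K·Diag(η) is strictly positive. (b) If η′ ∈ {0,1}^N is defined by η′_i = 1 when i is even and η′_i = 0 when i is odd (indices 1, …, N), then (K·Diag(η′))² = 0, hence the spectral radius of K·Diag(η′) is 0. Consequently, the minimal cost (1/N) Σ_i (1 − η_i) of a strategy η ∈ [0,1]^N with spectral radius of K·Diag(η) equal to 0 is ⌈N/2⌉/N. -/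
/-- The spectral radius of a real square matrix: the maximum of the moduli of its
complex eigenvalues. -/
noncomputable def matrixSpecRad {N : ℕ} (A : Matrix (Fin N) (Fin N) ℝ) : ℝ :=
  sSup ((fun z : ℂ => ‖z‖) '' spectrum ℂ (A.map Complex.ofReal))

open Polynomial Finset in
lemma aux_mem_spectrum_of_isRoot {n : ℕ} (A : Matrix (Fin n) (Fin n) ℂ) {r : ℂ}
    (h : A.charpoly.IsRoot r) : r ∈ spectrum ℂ A := by
  rw [spectrum.mem_iff, Matrix.isUnit_iff_isUnit_det, isUnit_iff_ne_zero, not_not]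
  have heq : algebraMap ℂ (Matrix (Fin n) (Fin n) ℂ) r - A
      = (Matrix.charmatrix A).map (Polynomial.evalRingHom r) := by
    ext i j
    simp only [Matrix.sub_apply, Matrix.map_apply, Matrix.charmatrix_apply,
      Matrix.algebraMap_matrix_apply, Matrix.scalar_apply, Matrix.diagonal_apply,
      RingHom.mapMatrix_apply, coe_evalRingHom, eval_sub, Matrix.one_apply]
    by_cases hij : i = j <;> simp [hij]
  rw [heq]
  have h2 : (A.charmatrix.map ⇑(Polynomial.evalRingHom r)).det
      = (Polynomial.evalRingHom r) A.charmatrix.det :=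
    ((Polynomial.evalRingHom r).map_det A.charmatrix).symm
  rw [h2]
  simpa [Matrix.charpoly] using h

lemma aux_exists_adjacent {N : ℕ} [NeZero N] (hN : 3 ≤ N) (S : Finset (Fin N))
    (hS : N < 2 * S.card) : ∃ i : Fin N, i ∈ S ∧ i + 1 ∈ S := by
  by_contra hc
  push_neg at hc
  have key : ∀ i : Fin N, ((if i ∈ S then 1 else 0) + (if i + 1 ∈ S then 1 else 0) : ℕ) ≤ 1 := by
    intro i
    by_cases h1 : i ∈ S
    · have h2 := hc i h1
      simp [h1, h2]
    · by_cases h2 : i + 1 ∈ S <;> simp [h1, h2]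
  have h1 : ∑ i : Fin N, (((if i ∈ S then 1 else 0) + (if i + 1 ∈ S then 1 else 0)) : ℕ)
      ≤ ∑ _i : Fin N, 1 := Finset.sum_le_sum (fun i _ => key i)
  rw [Finset.sum_add_distrib] at h1
  have h2 : ∑ i : Fin N, (if i + 1 ∈ S then (1:ℕ) else 0)
      = ∑ i : Fin N, (if i ∈ S then (1:ℕ) else 0) :=
    Fintype.sum_equiv (Equiv.addRight (1 : Fin N)) _ _ (fun i => rfl)
  have h3 : ∑ i : Fin N, (if i ∈ S then (1:ℕ) else 0) = S.card := by
    simp [Finset.sum_ite_mem]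
  rw [h2, h3] at h1
  simp at h1
  omega

open Finset in
lemma aux_count_sum : ∀ n : ℕ,
    (∑ i ∈ Finset.range n, (if (i + 1) % 2 = 0 then (0:ℝ) else 1)) = ((n + 1) / 2 : ℕ) := by
  intro n
  induction n with
  | zero => simp
  | succ n ih =>
    rw [Finset.sum_range_succ, ih]
    by_cases h : (n + 1) % 2 = 0
    · have h2 : (n + 1 + 1) / 2 = (n + 1) / 2 := by omega
      rw [if_pos h, h2, add_zero]
    · have h2 : (n + 1 + 1) / 2 = (n + 1) / 2 + 1 := by omega
      rw [if_neg h, h2]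
      push_cast
      ring

/-- For the fully symmetric circle model on `N ≥ 3` groups (labels `1, …, N`, encoded by
`i : Fin N ↦` label `i+1`):
(a) any strategy with `∑ (1 - η i) < ⌈N/2⌉` has positive effective reproduction number;
(b) the strategy vaccinating exactly the odd-labelled groups makes `K·Diag(η')` nilpotent of
order 2, hence has zero effective reproduction number;
consequently the minimal cost of a strategy stopping transmission is `⌈N/2⌉/N`. -/
theorem stmt3 (N : ℕ) (hN : 3 ≤ N) (K : Matrix (Fin N) (Fin N) ℝ)
    (hK : ∀ i j, K i j =
      if (j : ℕ) = ((i : ℕ) + 1) % N ∨ ((j : ℕ) + 1) % N = (i : ℕ) then 1 else 0)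
    (η' : Fin N → ℝ) (hη' : ∀ i, η' i = if ((i : ℕ) + 1) % 2 = 0 then 1 else 0) :
    (∀ η : Fin N → ℝ, (∀ i, η i ∈ Set.Icc (0 : ℝ) 1) →
      (∑ i, (1 - η i)) < (⌈(N : ℝ) / 2⌉₊ : ℝ) →
      0 < matrixSpecRad (K * Matrix.diagonal η)) ∧
    ((K * Matrix.diagonal η') ^ 2 = 0 ∧ matrixSpecRad (K * Matrix.diagonal η') = 0) ∧
    IsLeast
      {c : ℝ | ∃ η : Fin N → ℝ, (∀ i, η i ∈ Set.Icc (0 : ℝ) 1) ∧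
        matrixSpecRad (K * Matrix.diagonal η) = 0 ∧
        c = (1 / N : ℝ) * ∑ i, (1 - η i)}
      ((⌈(N : ℝ) / 2⌉₊ : ℝ) / N) := by
  haveI : NeZero N := ⟨by omega⟩
  have hmapmul : ∀ (P Q : Matrix (Fin N) (Fin N) ℝ),
      (P * Q).map Complex.ofReal = P.map Complex.ofReal * Q.map Complex.ofReal := by
    intro P Q
    exact Matrix.map_mul (f := Complex.ofRealHom)
  have hKnn : ∀ i j, 0 ≤ K i j := by
    intro i j; rw [hK]; split <;> norm_num
  have hceil : ⌈(N : ℝ) / 2⌉₊ = (N + 1) / 2 := by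
    have h1 : (N : ℝ) ≤ 2 * ((N + 1) / 2 : ℕ) := by exact_mod_cast (by omega : N ≤ 2 * ((N+1)/2))
    have h2 : (2 : ℝ) * ((N + 1) / 2 : ℕ) ≤ N + 1 := by
      exact_mod_cast (by omega : 2 * ((N+1)/2) ≤ N + 1)
    rw [Nat.ceil_eq_iff (by omega)]
    constructor
    · rw [Nat.cast_sub (by omega : 1 ≤ (N+1)/2)]
      push_cast
      linarith
    · linarith
  have hval : ∀ i : Fin N, ((i + 1 : Fin N) : ℕ) = ((i : ℕ) + 1) % N := by
    intro i
    rw [Fin.val_add, Fin.val_one']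
    rw [Nat.mod_eq_of_lt (show 1 < N by omega)]
  -- Part (a)
  have partA : ∀ η : Fin N → ℝ, (∀ i, η i ∈ Set.Icc (0 : ℝ) 1) →
      (∑ i, (1 - η i)) < (⌈(N : ℝ) / 2⌉₊ : ℝ) →
      0 < matrixSpecRad (K * Matrix.diagonal η) := by
    intro η hmem hsum
    set M := K * Matrix.diagonal η with hM
    have hMapp : ∀ a b, M a b = K a b * η b := fun a b => Matrix.mul_diagonal _ _ _ _
    have hMnn : ∀ a b, 0 ≤ M a b := fun a b => by
      rw [hMapp]; exact mul_nonneg (hKnn a b) (hmem b).1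
    -- find an adjacent pair with positive η
    set S : Finset (Fin N) := Finset.univ.filter (fun i => η i ≠ 0) with hSdef
    have hScard : N < 2 * S.card := by
      have hsub : Sᶜ ⊆ Finset.univ := Finset.subset_univ _
      have h1 : ((Sᶜ).card : ℝ) ≤ ∑ i, (1 - η i) := by
        calc ((Sᶜ).card : ℝ) = ∑ i ∈ Sᶜ, (1 - η i) := by
              rw [Finset.card_eq_sum_ones]
              push_cast
              apply Finset.sum_congr rfl
              intro i hi
              have : ¬ η i ≠ 0 := by simpa [hSdef] using hi
              simp [not_not.mp this]
          _ ≤ ∑ i, (1 - η i) := by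
              apply Finset.sum_le_sum_of_subset_of_nonneg hsub
              intro i _ _
              have := (hmem i).2
              linarith
      have h2 : ((Sᶜ).card : ℝ) < ((N + 1) / 2 : ℕ) := by
        rw [← hceil]; linarith
      have h3 : (Sᶜ).card < (N + 1) / 2 := by exact_mod_cast h2
      have h4 : (Sᶜ).card = N - S.card := by
        rw [Finset.card_compl, Fintype.card_fin]
      have h5 : S.card ≤ N := by
        simpa using Finset.card_le_card (Finset.subset_univ S)
      omega
    obtain ⟨i, hi, hi1⟩ := aux_exists_adjacent hN S hScard
    have hηi : 0 < η i := lt_of_le_of_ne (hmem i).1 (Ne.symm (by simpa [hSdef] using hi))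
    have hηi1 : 0 < η (i + 1) := lt_of_le_of_ne (hmem (i + 1)).1 (Ne.symm (by simpa [hSdef] using hi1))
    have hK1 : K i (i + 1) = 1 := by rw [hK]; exact if_pos (Or.inl (hval i))
    have hK2 : K (i + 1) i = 1 := by rw [hK]; exact if_pos (Or.inr (hval i).symm)
    -- trace of M² is positive
    have htr : 0 < Matrix.trace (M * M) := by
      have hdiagnn : ∀ a : Fin N, 0 ≤ (M * M) a a := by
        intro a
        rw [Matrix.mul_apply]
        exact Finset.sum_nonneg fun k _ => mul_nonneg (hMnn a k) (hMnn k a)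
      have hdiagpos : 0 < (M * M) i i := by
        rw [Matrix.mul_apply]
        apply Finset.sum_pos' (fun k _ => mul_nonneg (hMnn i k) (hMnn k i))
        refine ⟨i + 1, Finset.mem_univ _, ?_⟩
        rw [hMapp, hMapp, hK1, hK2]
        nlinarith
      rw [Matrix.trace]
      exact Finset.sum_pos' (fun a _ => hdiagnn a) ⟨i, Finset.mem_univ _, hdiagpos⟩
    -- now by contradiction
    by_contra h0
    push_neg at h0
    set A := M.map Complex.ofReal with hA
    have hbdd : BddAbove ((fun z : ℂ => ‖z‖) '' spectrum ℂ A) :=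
      ((Matrix.finite_spectrum A).image _).bddAbove
    have hsubset : spectrum ℂ A ⊆ {0} := by
      intro lam hl
      have hle : ‖lam‖ ≤ matrixSpecRad M := le_csSup hbdd ⟨lam, hl, rfl⟩
      have : ‖lam‖ ≤ 0 := le_trans hle h0
      have : ‖lam‖ = 0 := le_antisymm this (norm_nonneg lam)
      simpa using this
    have hA2 : spectrum ℂ (A ^ 2) ⊆ {0} := by
      rw [spectrum.map_pow_of_pos A (by norm_num : 0 < 2)]
      rintro x ⟨l, hl, rfl⟩
      have : l = 0 := hsubset hl
      simp [this]
    have htr0 : Matrix.trace (A ^ 2) = 0 := by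
      rw [Matrix.trace_eq_sum_roots_charpoly]
      apply Multiset.sum_eq_zero
      intro r hr
      exact hA2 (aux_mem_spectrum_of_isRoot _ (Polynomial.isRoot_of_mem_roots hr))
    have hAM : Matrix.trace (A ^ 2) = ((Matrix.trace (M * M) : ℝ) : ℂ) := by
      have h1 : A ^ 2 = (M * M).map Complex.ofReal := by
        rw [pow_two, hA, ← hmapmul]
      rw [h1, Matrix.trace, Matrix.trace]
      push_cast
      simp [Matrix.map_apply]
    rw [hAM] at htr0
    have : Matrix.trace (M * M) = 0 := by exact_mod_cast htr0
    linarith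
  -- Part (b)
  have hnil : (K * Matrix.diagonal η') ^ 2 = 0 := by
    have hKzero : ∀ k b : Fin N, (k : ℕ) % 2 = 1 → (b : ℕ) % 2 = 1 → K k b = 0 := by
      intro k b hk hb
      rw [hK]
      rw [if_neg]
      rintro (h | h)
      · rcases lt_or_ge ((k : ℕ) + 1) N with h' | h'
        · rw [Nat.mod_eq_of_lt h'] at h; omega
        · have hkN : (k : ℕ) + 1 = N := by have := k.isLt; omega
          rw [hkN, Nat.mod_self] at h; omega
      · rcases lt_or_ge ((b : ℕ) + 1) N with h' | h'
        · rw [Nat.mod_eq_of_lt h'] at h; omega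
        · have hbN : (b : ℕ) + 1 = N := by have := b.isLt; omega
          rw [hbN, Nat.mod_self] at h; omega
    ext a b
    rw [pow_two]
    rw [Matrix.mul_apply]
    simp only [Matrix.zero_apply]
    apply Finset.sum_eq_zero
    intro k _
    rw [Matrix.mul_diagonal, Matrix.mul_diagonal]
    by_cases hb : η' b = 0
    · simp [hb]
    by_cases hkz : η' k = 0
    · simp [hkz]
    have hbodd : (b : ℕ) % 2 = 1 := by
      rw [hη' b] at hb
      by_cases h : ((b : ℕ) + 1) % 2 = 0
      · omega
      · simp [h] at hb
    have hkodd : (k : ℕ) % 2 = 1 := by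
      rw [hη' k] at hkz
      by_cases h : ((k : ℕ) + 1) % 2 = 0
      · omega
      · simp [h] at hkz
    rw [hKzero k b hkodd hbodd]
    ring
  have hspec0 : matrixSpecRad (K * Matrix.diagonal η') = 0 := by
    haveI : Nonempty (Fin N) := ⟨⟨0, by omega⟩⟩
    set A' := (K * Matrix.diagonal η').map Complex.ofReal with hA'
    have hA'2 : A' ^ 2 = 0 := by
      have h1 : A' ^ 2 = ((K * Matrix.diagonal η') ^ 2).map Complex.ofReal := by
        rw [pow_two, pow_two, hA', ← hmapmul]
      rw [h1, hnil]
      ext a b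
      simp
    have hsubset : spectrum ℂ A' ⊆ {0} := by
      intro l hl
      have h1 : l ^ 2 ∈ spectrum ℂ (A' ^ 2) := spectrum.pow_image_subset A' 2 ⟨l, hl, rfl⟩
      rw [hA'2, spectrum.zero_eq] at h1
      have : l ^ 2 = 0 := h1
      simpa using pow_eq_zero_iff (by norm_num : 2 ≠ 0) |>.mp this
    have hne : (spectrum ℂ A').Nonempty :=
      spectrum.nonempty_of_isAlgClosed_of_finiteDimensional ℂ A'
    have heq : spectrum ℂ A' = {0} := by
      apply Set.eq_of_subset_of_subset hsubset
      intro x hx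
      obtain ⟨y, hy⟩ := hne
      have := hsubset hy
      simp only [Set.mem_singleton_iff] at this hx
      rw [hx, ← this]
      exact hy
    show sSup ((fun z : ℂ => ‖z‖) '' spectrum ℂ A') = 0
    rw [heq]
    simp
  refine ⟨partA, ⟨hnil, hspec0⟩, ?_, ?_⟩
  · -- membership
    refine ⟨η', ?_, hspec0, ?_⟩
    · intro i
      rw [hη' i]
      split <;> norm_num
    · have hsum' : ∑ i, (1 - η' i) = ((N + 1) / 2 : ℕ) := by
        have h1 : ∀ i : Fin N, 1 - η' i = if ((i : ℕ) + 1) % 2 = 0 then (0:ℝ) else 1 := by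
          intro i; rw [hη' i]; split <;> norm_num
        calc ∑ i, (1 - η' i) = ∑ i : Fin N, (if ((i : ℕ) + 1) % 2 = 0 then (0:ℝ) else 1) :=
              Finset.sum_congr rfl (fun i _ => h1 i)
          _ = ∑ i ∈ Finset.range N, (if (i + 1) % 2 = 0 then (0:ℝ) else 1) :=
              Fin.sum_univ_eq_sum_range (fun i => if (i + 1) % 2 = 0 then (0:ℝ) else 1) N
          _ = ((N + 1) / 2 : ℕ) := aux_count_sum N
      rw [hsum', hceil]
      rw [div_eq_mul_one_div]
      ring
  · -- lower bound
    rintro c ⟨η, hmem, hspec, rfl⟩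
    have hle : (⌈(N : ℝ) / 2⌉₊ : ℝ) ≤ ∑ i, (1 - η i) := by
      by_contra hlt
      push_neg at hlt
      have := partA η hmem hlt
      rw [hspec] at this
      exact lt_irrefl 0 this
    have hN0 : (0:ℝ) < N := by positivity
    rw [div_eq_mul_one_div, mul_comm]
    exact mul_le_mul_of_nonneg_left hle (by positivity)
end

section
/- Let n ≥ 1 and μ_1 ≥ μ_2 ≥ ⋯ ≥ μ_n > 0. Let β ∈ [0, n) and α ∈ [0, μ_1], and define ξ^v ∈ ℝ^n by ξ^v_i = μ_i · min(1, max(β + 1 − i, 0)) and ξ^h ∈ ℝ^n by ξ^h_i = min(α, μ_i). Then for every ξ ∈ [0, μ_1] × ⋯ × [0, μ_n]: if Σ_{i=1}^n ξ_i = Σ_{i=1}^n ξ^v_i then ξ ≺ ξ^v, and if Σ_{i=1}^n ξ_i = Σ_{i=1}^n ξ^h_i then ξ^h ≺ ξ. -/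
/-- The sum of the `m` largest entries of `ξ ∈ ℝ^n`, expressed as the supremum of the
sums of `ξ` over subsets of cardinality `m`. -/
noncomputable def topSum {n : ℕ} (ξ : Fin n → ℝ) (m : ℕ) : ℝ :=
  sSup ((fun s : Finset (Fin n) => ∑ i ∈ s, ξ i) '' {s | s.card = m})

/-- `ξ` is majorized by `χ`: for every `m`, the sum of the `m` largest entries of `ξ`
is at most the sum of the `m` largest entries of `χ`, and the total sums agree. -/
def IsMajorizedBy {n : ℕ} (ξ χ : Fin n → ℝ) : Prop :=
  (∀ m, m ≤ n → topSum ξ m ≤ topSum χ m) ∧ ∑ i, ξ i = ∑ i, χ i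

private lemma le_topSum' {n : ℕ} (ξ : Fin n → ℝ) {m : ℕ} {s : Finset (Fin n)}
    (hs : s.card = m) : ∑ i ∈ s, ξ i ≤ topSum ξ m :=
  le_csSup (((Set.toFinite _).image _).bddAbove) ⟨s, hs, rfl⟩

private lemma topSum_le' {n : ℕ} (ξ : Fin n → ℝ) {m : ℕ} (hm : m ≤ n) {B : ℝ}
    (h : ∀ s : Finset (Fin n), s.card = m → ∑ i ∈ s, ξ i ≤ B) : topSum ξ m ≤ B := by
  obtain ⟨t, -, ht⟩ := Finset.exists_subset_card_eq
    (s := (Finset.univ : Finset (Fin n))) (n := m) (by simpa using hm)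
  exact csSup_le ⟨_, ⟨t, ht, rfl⟩⟩ (by rintro b ⟨s, hs, rfl⟩; exact h s hs)

private lemma aux_sum_le {n : ℕ} {f g : Fin n → ℝ} {s t : Finset (Fin n)}
    (hcard : s.card = t.card) (c : ℝ) (h1 : ∀ j ∈ s ∩ t, f j ≤ g j)
    (h2 : ∀ j ∈ s \ t, f j ≤ c) (h3 : ∀ j ∈ t \ s, c ≤ g j) :
    ∑ j ∈ s, f j ≤ ∑ j ∈ t, g j := by
  have e1 := Finset.sum_inter_add_sum_sdiff s t f
  have e2 := Finset.sum_inter_add_sum_sdiff t s g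
  have hk : (s \ t).card = (t \ s).card := by
    have c1 := Finset.card_sdiff_add_card_inter s t
    have c2 := Finset.card_sdiff_add_card_inter t s
    rw [Finset.inter_comm t s] at c2
    omega
  have b1 : ∑ j ∈ s \ t, f j ≤ (s \ t).card • c := Finset.sum_le_card_nsmul _ _ _ h2
  have b2 : (t \ s).card • c ≤ ∑ j ∈ t \ s, g j := Finset.card_nsmul_le_sum _ _ _ h3
  have b3 : ∑ j ∈ s ∩ t, f j ≤ ∑ j ∈ t ∩ s, g j := by
    rw [Finset.inter_comm t s]; exact Finset.sum_le_sum h1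
  rw [hk] at b1
  linarith

/-- Extreme vaccinations: among all effective population profiles
`ξ ∈ [0,μ_1] × ⋯ × [0,μ_n]` with a given total, the "vertical" profile
`ξ^v_i = μ_i min(1, (β+1-i)_+)` majorizes every profile and the "horizontal" profile
`ξ^h_i = min(α, μ_i)` is majorized by every profile. (Index `i : Fin n` encodes the
label `i+1 ∈ {1,…,n}`.) -/
theorem stmt7 (n : ℕ) (hn : 1 ≤ n) (μ : Fin n → ℝ) (hpos : ∀ i, 0 < μ i)
    (hmono : ∀ i j : Fin n, i ≤ j → μ j ≤ μ i)
    (β : ℝ) (hβ0 : 0 ≤ β) (hβn : β < n)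
    (α : ℝ) (hα : α ∈ Set.Icc 0 (μ ⟨0, by omega⟩))
    (ξv ξh : Fin n → ℝ)
    (hξv : ∀ i, ξv i = μ i * min 1 (max (β + 1 - ((i : ℕ) + 1)) 0))
    (hξh : ∀ i, ξh i = min α (μ i)) :
    ∀ ξ : Fin n → ℝ, (∀ i, ξ i ∈ Set.Icc 0 (μ i)) →
      ((∑ i, ξ i = ∑ i, ξv i → IsMajorizedBy ξ ξv) ∧
        (∑ i, ξ i = ∑ i, ξh i → IsMajorizedBy ξh ξ)) := by
  intro ξ hξ
  have hξ0 : ∀ i, 0 ≤ ξ i := fun i => (hξ i).1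
  have hξμ : ∀ i, ξ i ≤ μ i := fun i => (hξ i).2
  constructor
  · -- vertical part
    intro hsum
    refine ⟨fun m hm => ?_, hsum⟩
    set Im : Finset (Fin n) :=
      (Finset.range m).attachFin (fun i hi => lt_of_lt_of_le (Finset.mem_range.mp hi) hm)
      with hImdef
    have hImcard : Im.card = m := by
      simp [hImdef, Finset.card_attachFin]
    have hImmem : ∀ j : Fin n, j ∈ Im ↔ (j : ℕ) < m := by
      intro j; simp [hImdef, Finset.mem_attachFin]
    refine le_trans (topSum_le' ξ hm ?_) (le_topSum' ξv hImcard)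
    intro s hscard
    rcases le_or_gt β (m : ℝ) with hc | hc
    · -- β ≤ m : ξv vanishes outside Im
      have h0 : ∀ i ∈ Imᶜ, ξv i = 0 := by
        intro i hi
        have hmi : m ≤ (i : ℕ) := by
          have := Finset.mem_compl.mp hi
          rw [hImmem] at this; omega
        have hmi' : (m : ℝ) ≤ (i : ℕ) := by exact_mod_cast hmi
        have hx : β + 1 - ((i : ℕ) + 1) ≤ 0 := by linarith
        rw [hξv, max_eq_right hx, min_eq_right (by norm_num), mul_zero]
      have hT : ∑ i ∈ Im, ξv i = ∑ i, ξ i := by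
        rw [hsum, ← Finset.sum_add_sum_compl Im ξv, Finset.sum_eq_zero h0, add_zero]
      rw [hT]
      exact Finset.sum_le_sum_of_subset_of_nonneg (Finset.subset_univ s)
        (fun i _ _ => hξ0 i)
    · -- m < β : ξv equals μ on Im
      have hIm : ∀ i ∈ Im, ξv i = μ i := by
        intro i hi
        have him : (i : ℕ) < m := (hImmem i).mp hi
        have him' : ((i : ℕ) : ℝ) + 1 ≤ (m : ℝ) := by exact_mod_cast him
        have h1 : (1 : ℝ) ≤ β + 1 - ((i : ℕ) + 1) := by linarith
        rw [hξv, max_eq_left (by linarith), min_eq_left h1, mul_one]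
      have hμs : ∑ i ∈ s, μ i ≤ ∑ i ∈ Im, μ i := by
        by_cases hne : (s \ Im).Nonempty
        · obtain ⟨j₀, hj₀⟩ := hne
          have hj₀m : m ≤ (j₀ : ℕ) := by
            have := (Finset.mem_sdiff.mp hj₀).2
            rw [hImmem] at this; omega
          have hmn : m < n := lt_of_le_of_lt hj₀m j₀.isLt
          refine aux_sum_le (by rw [hscard, hImcard]) (μ ⟨m, hmn⟩)
            (fun j _ => le_refl _) ?_ ?_
          · intro j hj
            have : m ≤ (j : ℕ) := by
              have := (Finset.mem_sdiff.mp hj).2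
              rw [hImmem] at this; omega
            exact hmono ⟨m, hmn⟩ j (by simpa [Fin.le_def])
          · intro j hj
            have : (j : ℕ) < m := (hImmem j).mp (Finset.mem_sdiff.mp hj).1
            exact hmono j ⟨m, hmn⟩ (by simp [Fin.le_def]; omega)
        · have hsub : s ⊆ Im := by
            rwa [← Finset.sdiff_eq_empty_iff_subset, ← Finset.not_nonempty_iff_eq_empty]
          have : s = Im := Finset.eq_of_subset_of_card_le hsub (by omega)
          rw [this]
      calc ∑ i ∈ s, ξ i ≤ ∑ i ∈ s, μ i := Finset.sum_le_sum (fun i _ => hξμ i)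
        _ ≤ ∑ i ∈ Im, μ i := hμs
        _ = ∑ i ∈ Im, ξv i := Finset.sum_congr rfl (fun i hi => (hIm i hi).symm)
  · -- horizontal part
    intro hsum
    refine ⟨fun m hm => ?_, hsum.symm⟩
    rcases Nat.eq_zero_or_pos m with rfl | hm0
    · refine le_trans (topSum_le' ξh (Nat.zero_le n) ?_) (le_topSum' ξ (s := ∅) rfl)
      intro t ht
      rw [Finset.card_eq_zero.mp ht]; simp
    -- choose a maximizing set s of cardinality m
    have hPC : (Finset.powersetCard m (Finset.univ : Finset (Fin n))).Nonempty := by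
      obtain ⟨t, -, ht⟩ := Finset.exists_subset_card_eq
        (s := (Finset.univ : Finset (Fin n))) (n := m) (by simpa using hm)
      exact ⟨t, by simpa using ht⟩
    obtain ⟨s, hsmem, hsmax⟩ :=
      Finset.exists_max_image (Finset.powersetCard m Finset.univ)
        (fun u => ∑ i ∈ u, ξ i) hPC
    have hscard : s.card = m := by simpa using hsmem
    have hP : ∀ j, j ∉ s → ∀ i ∈ s, ξ j ≤ ξ i := by
      intro j hj i hi
      by_contra hlt
      push_neg at hlt
      have hje : j ∉ s.erase i := fun h => hj (Finset.mem_of_mem_erase h)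
      have hmem' : insert j (s.erase i) ∈ Finset.powersetCard m Finset.univ := by
        simp only [Finset.mem_powersetCard_univ]
        rw [Finset.card_insert_of_notMem hje, Finset.card_erase_of_mem hi, hscard]
        omega
      have hle := hsmax _ hmem'
      rw [Finset.sum_insert hje] at hle
      have herase := Finset.sum_erase_add s ξ hi
      linarith
    have hsne : s.Nonempty := Finset.card_pos.mp (by omega)
    obtain ⟨i₀, hi₀s, hi₀min⟩ := s.exists_min_image ξ hsne
    set c := ξ i₀ with hcdef
    have hkey : ∀ t : Finset (Fin n), t.card = m → ∑ i ∈ t, ξh i ≤ ∑ i ∈ s, ξ i := by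
      intro t htcard
      rcases le_or_gt α c with hac | hca
      · -- every selected entry is at least α
        have b1 : ∑ i ∈ t, ξh i ≤ t.card • α := by
          refine Finset.sum_le_card_nsmul _ _ _ (fun i _ => ?_)
          rw [hξh]; exact min_le_left _ _
        have b2 : s.card • α ≤ ∑ i ∈ s, ξ i := by
          refine Finset.card_nsmul_le_sum _ _ _ (fun i hi => ?_)
          exact le_trans hac (hi₀min i hi)
        rw [htcard] at b1; rw [hscard] at b2
        linarith
      · -- c < α : compare complements
        have hcomp : ∑ j ∈ sᶜ, ξ j ≤ ∑ j ∈ tᶜ, ξh j := by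
          have hjle : ∀ j, j ∈ sᶜ → ξ j ≤ ξh j := by
            intro j hj
            have hjs : j ∉ s := Finset.mem_compl.mp hj
            have : ξ j ≤ c := hP j hjs i₀ hi₀s
            rw [hξh]
            exact le_min (le_trans this hca.le) (hξμ j)
          refine aux_sum_le ?_ c (fun j hj => hjle j (Finset.mem_inter.mp hj).1)
            (fun j hj => hP j (Finset.mem_compl.mp (Finset.mem_sdiff.mp hj).1) i₀ hi₀s)
            ?_
          · rw [Finset.card_compl, Finset.card_compl, hscard, htcard]
          · intro j hj
            have hjs : j ∈ s := by
              have := (Finset.mem_sdiff.mp hj).2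
              simpa using this
            rw [hξh]
            exact le_min hca.le (le_trans (hi₀min j hjs) (hξμ j))
        have e1 := Finset.sum_add_sum_compl s ξ
        have e2 := Finset.sum_add_sum_compl t ξh
        have e3 : ∑ i, ξ i = ∑ i, ξh i := hsum
        linarith
    exact le_trans (topSum_le' ξh hm hkey) (le_topSum' ξ hscard)
end

section
/- Assume R_0 = 1, so that k^ε(x,y) = 1 + ε α(x) α(y) with ε ∈ {−1, +1}. Then for every vaccination strategy η, writing A = ∫ η dμ, B = ∫ α² η dμ and M = ∫ α η dμ, the effective reproduction number satisfies 2 R_e^ε(η) = A + εB + √((A − εB)² + 4ε M²). -/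
open MeasureTheory

/-- `T` is the integral operator on `L²(μ)` associated with the kernel `K`:
for every `g ∈ L²(μ)`, `T g` agrees `μ`-a.e. with `x ↦ ∫ K x y * g y dμ(y)`. -/
def IsKernelOp {Ω : Type*} [MeasurableSpace Ω] (μ : Measure Ω) (K : Ω → Ω → ℝ)
    (T : Lp ℝ 2 μ →L[ℝ] Lp ℝ 2 μ) : Prop :=
  ∀ g : Lp ℝ 2 μ, ⇑(T g) =ᵐ[μ] fun x => ∫ y, K x y * g y ∂μ

/-- The spectral radius of a bounded operator on `L²(μ)`. -/
noncomputable def rho {Ω : Type*} [MeasurableSpace Ω] {μ : Measure Ω}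
    (T : Lp ℝ 2 μ →L[ℝ] Lp ℝ 2 μ) : ℝ :=
  (spectralRadius ℝ T).toReal


lemma cubic_isUnit {R : Type*} [Ring R] [Algebra ℝ R] (x : R) (τ δ z : ℝ)
    (hx : x ^ 3 = τ • x ^ 2 - δ • x) (hz : z ≠ 0) (hd : z ^ 2 - τ * z + δ ≠ 0) :
    IsUnit (algebraMap ℝ R z - x) := by
  have hzd : z * (z ^ 2 - τ * z + δ) ≠ 0 := mul_ne_zero hz hd
  have h2 : x * x = x ^ 2 := (sq x).symm
  have h3 : x * x ^ 2 = x ^ 3 := (pow_succ' x 2).symm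
  have h3' : x ^ 2 * x = x ^ 3 := (pow_succ x 2).symm
  have key : (algebraMap ℝ R z - x) * (x ^ 2 + (z - τ) • x + (z ^ 2 - τ * z + δ) • 1)
      = (z * (z ^ 2 - τ * z + δ)) • 1 := by
    rw [Algebra.algebraMap_eq_smul_one]
    simp only [mul_add, add_mul, sub_mul, mul_sub, smul_mul_assoc, mul_smul_comm, one_mul,
      mul_one, h2, h3, h3', hx]
    module
  have key' : (x ^ 2 + (z - τ) • x + (z ^ 2 - τ * z + δ) • 1) * (algebraMap ℝ R z - x)
      = (z * (z ^ 2 - τ * z + δ)) • 1 := by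
    rw [Algebra.algebraMap_eq_smul_one]
    simp only [mul_add, add_mul, sub_mul, mul_sub, smul_mul_assoc, mul_smul_comm, one_mul,
      mul_one, h2, h3, h3', hx]
    module
  refine ⟨⟨algebraMap ℝ R z - x,
    (z * (z ^ 2 - τ * z + δ))⁻¹ • (x ^ 2 + (z - τ) • x + (z ^ 2 - τ * z + δ) • 1), ?_, ?_⟩, rfl⟩
  · rw [mul_smul_comm, key, smul_smul, inv_mul_cancel₀ hzd, one_smul]
  · rw [smul_mul_assoc, key', smul_smul, inv_mul_cancel₀ hzd, one_smul]


lemma rank_two_spectralRadius {E : Type*} [NormedAddCommGroup E] [NormedSpace ℝ E]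
    [CompleteSpace E] (T : E →L[ℝ] E) (u v : E) (A B M ε lam : ℝ)
    (hu : T u = A • u + (ε * M) • v)
    (hv : T v = M • u + (ε * B) • v)
    (hran : ∀ g : E, ∃ a b : ℝ, T g = a • u + b • v)
    (w : E) (hwne : w ≠ 0) (hTw : T w = lam • w)
    (hlam : lam = (A + ε * B + Real.sqrt ((A - ε * B) ^ 2 + 4 * ε * M ^ 2)) / 2)
    (hτ : 0 ≤ A + ε * B) (hD : 0 ≤ (A - ε * B) ^ 2 + 4 * ε * M ^ 2) :
    (spectralRadius ℝ T).toReal = lam := by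
  set τ : ℝ := A + ε * B with hτdef
  set δ : ℝ := ε * (A * B) - ε * M ^ 2 with hδdef
  set D : ℝ := (A - ε * B) ^ 2 + 4 * ε * M ^ 2 with hDdef
  have hs2 : Real.sqrt D ^ 2 = D := Real.sq_sqrt hD
  have hs0 : 0 ≤ Real.sqrt D := Real.sqrt_nonneg D
  have hroot : lam ^ 2 - τ * lam + δ = 0 := by
    rw [hlam, hτdef, hδdef]
    have : D = (A + ε * B) ^ 2 - 4 * (ε * (A * B) - ε * M ^ 2) := by rw [hDdef]; ring
    nlinarith [hs2, this]
  have hlam0 : 0 ≤ lam := by rw [hlam]; linarith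
  -- Cayley-Hamilton type identity
  have hCH : T ^ 3 = τ • T ^ 2 - δ • T := by
    ext g
    obtain ⟨a, b, hg⟩ := hran g
    have h2 : T (T g) = (a * A + b * M) • u + (a * (ε * M) + b * (ε * B)) • v := by
      rw [hg, map_add, T.map_smul, T.map_smul, hu, hv]; module
    have h3 : T (T (T g)) = ((a * A + b * M) * A + (a * (ε * M) + b * (ε * B)) * M) • u +
        ((a * A + b * M) * (ε * M) + (a * (ε * M) + b * (ε * B)) * (ε * B)) • v := by
      rw [h2, map_add, T.map_smul, T.map_smul, hu, hv]; module
    simp only [ContinuousLinearMap.sub_apply, ContinuousLinearMap.smul_apply,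
      ContinuousLinearMap.mul_apply, pow_succ, pow_zero, ContinuousLinearMap.one_apply]
    rw [h3, h2, hg, hτdef, hδdef]
    module
  -- membership of lam
  have hmem : lam ∈ spectrum ℝ T := by
    rw [spectrum.mem_iff]
    intro hU
    obtain ⟨Z, hZ⟩ := hU.exists_left_inv
    apply hwne
    have h0 : (algebraMap ℝ (E →L[ℝ] E) lam - T) w = 0 := by
      rw [ContinuousLinearMap.sub_apply, Algebra.algebraMap_eq_smul_one,
        ContinuousLinearMap.smul_apply, ContinuousLinearMap.one_apply, hTw, sub_self]
    calc w = (Z * (algebraMap ℝ (E →L[ℝ] E) lam - T)) w := by rw [hZ]; rfl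
    _ = Z ((algebraMap ℝ (E →L[ℝ] E) lam - T) w) := rfl
    _ = 0 := by rw [h0, map_zero]
  -- spectrum is contained in {0, lam, τ - lam}
  have hsub : ∀ z ∈ spectrum ℝ T, z = 0 ∨ z = lam ∨ z = τ - lam := by
    intro z hz
    by_contra hcon
    push_neg at hcon
    obtain ⟨hz0, hz1, hz2⟩ := hcon
    have hδeq : δ = lam * (τ - lam) := by nlinarith [hroot]
    have hdz : z ^ 2 - τ * z + δ ≠ 0 := by
      rw [hδeq]
      intro h
      have : (z - lam) * (z - (τ - lam)) = 0 := by nlinarith [h]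
      rcases mul_eq_zero.1 this with h' | h'
      · exact hz1 (by linarith [sub_eq_zero.1 h'])
      · exact hz2 (by linarith [sub_eq_zero.1 h'])
    exact (spectrum.mem_iff.1 hz) (cubic_isUnit T τ δ z hCH hz0 hdz)
  have habs : |τ - lam| ≤ lam := by
    rw [abs_le]
    constructor <;> (rw [hlam]; linarith [hs0, hτ])
  have hrad : spectralRadius ℝ T = (‖lam‖₊ : ENNReal) := by
    apply le_antisymm
    · rw [spectralRadius]
      refine iSup₂_le fun z hz => ?_
      have hzle : |z| ≤ |lam| := by
        rw [abs_of_nonneg hlam0]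
        rcases hsub z hz with h | h | h
        · simp [h, hlam0]
        · simp [h, abs_of_nonneg hlam0]
        · rw [h]; exact habs
      exact ENNReal.coe_le_coe.2 (by
        simpa [← NNReal.coe_le_coe, coe_nnnorm, Real.norm_eq_abs] using hzle)
    · exact le_iSup₂ (f := fun (z : ℝ) (_ : z ∈ spectrum ℝ T) => (‖z‖₊ : ENNReal)) lam hmem
  rw [hrad, ENNReal.coe_toReal, coe_nnnorm, Real.norm_eq_abs, abs_of_nonneg hlam0]

set_option maxHeartbeats 1000000 in
/-- Explicit formula for the effective reproduction number of the rank-two p-regular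
kernel `k^ε(x,y) = 1 + ε α(x) α(y)` on `[0,1)`: with `A = ∫ η dμ`, `B = ∫ α² η dμ` and
`M = ∫ α η dμ`, one has `2 R_e^ε(η) = A + εB + √((A − εB)² + 4ε M²)`. -/
theorem stmt16 (μ : Measure ℝ) [IsProbabilityMeasure μ]
    (hsupp : μ (Set.Ico (0 : ℝ) 1)ᶜ = 0)
    (hcdf_mono : StrictMonoOn (fun x => (μ (Set.Icc 0 x)).toReal) (Set.Ico (0 : ℝ) 1))
    (hcdf_cont : ContinuousOn (fun x => (μ (Set.Icc 0 x)).toReal) (Set.Ico (0 : ℝ) 1))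
    (α : ℝ → ℝ) (hαm : Measurable α) (hαmono : StrictMonoOn α (Set.Ico (0 : ℝ) 1))
    (hαL2 : MemLp α 2 μ) (hαint : (∫ x, α x ∂μ) = 0)
    (hαbd : ∀ x ∈ Set.Ico (0 : ℝ) 1, α x ^ 2 ≤ 1)
    (ε : ℝ) (hε : ε = 1 ∨ ε = -1)
    (η : ℝ → ℝ) (hηm : Measurable η) (hη : ∀ x, η x ∈ Set.Icc (0 : ℝ) 1)
    (T : Lp ℝ 2 μ →L[ℝ] Lp ℝ 2 μ)
    (hT : IsKernelOp μ (fun x y => (1 + ε * α x * α y) * η y) T) :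
    2 * rho T =
      (∫ x, η x ∂μ) + ε * (∫ x, α x ^ 2 * η x ∂μ) +
        Real.sqrt (((∫ x, η x ∂μ) - ε * (∫ x, α x ^ 2 * η x ∂μ)) ^ 2 +
          4 * ε * (∫ x, α x * η x ∂μ) ^ 2) := by
  classical
  set A := ∫ x, η x ∂μ with hA
  set B := ∫ x, α x ^ 2 * η x ∂μ with hB
  set M := ∫ x, α x * η x ∂μ with hM
  have hη0 : ∀ x, 0 ≤ η x := fun x => (hη x).1
  have hη1 : ∀ x, η x ≤ 1 := fun x => (hη x).2
  have hηint : Integrable η μ := by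
    refine (integrable_const (1 : ℝ)).mono' hηm.aestronglyMeasurable ?_
    filter_upwards with x
    rw [Real.norm_eq_abs, abs_of_nonneg (hη0 x)]; exact hη1 x
  have hα2int : Integrable (fun x => α x ^ 2) μ := hαL2.integrable_sq
  have hα1int : Integrable α μ := hαL2.integrable one_le_two
  have hα2η : Integrable (fun x => α x ^ 2 * η x) μ := by
    refine hα2int.mono' ((hαm.pow_const 2).mul hηm).aestronglyMeasurable ?_
    filter_upwards with x
    rw [Real.norm_eq_abs, abs_mul, abs_of_nonneg (hη0 x), abs_of_nonneg (sq_nonneg _)]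
    nlinarith [sq_nonneg (α x), hη1 x, hη0 x]
  have hαη : Integrable (fun x => α x * η x) μ := by
    refine hα1int.abs.mono' (hαm.mul hηm).aestronglyMeasurable ?_
    filter_upwards with x
    rw [Real.norm_eq_abs, abs_mul, abs_of_nonneg (hη0 x)]
    exact mul_le_of_le_one_right (abs_nonneg _) (hη1 x)
  have hmemηg : ∀ g : Lp ℝ 2 μ, MemLp (fun y => η y * g y) 2 μ := by
    intro g
    refine (Lp.memLp g).of_le (hηm.aestronglyMeasurable.mul (Lp.aestronglyMeasurable g)) ?_
    filter_upwards with x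
    rw [Real.norm_eq_abs, Real.norm_eq_abs, abs_mul, abs_of_nonneg (hη0 x)]
    exact mul_le_of_le_one_left (abs_nonneg _) (hη1 x)
  have hint1 : ∀ g : Lp ℝ 2 μ, Integrable (fun y => η y * g y) μ :=
    fun g => (hmemηg g).integrable one_le_two
  have hmul2 : ∀ f g : ℝ → ℝ, MemLp f 2 μ → MemLp g 2 μ →
      Integrable (fun x => f x * g x) μ := by
    intro f g hf hg
    have hsum : Integrable (fun x => f x ^ 2 + g x ^ 2) μ := hf.integrable_sq.add hg.integrable_sq
    refine hsum.mono' (hf.1.mul hg.1) ?_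
    filter_upwards with x
    rw [Real.norm_eq_abs, abs_mul]
    nlinarith [sq_nonneg (|f x| - |g x|), sq_abs (f x), sq_abs (g x),
      abs_nonneg (f x), abs_nonneg (g x)]
  have hint2 : ∀ g : Lp ℝ 2 μ, Integrable (fun y => α y * η y * g y) μ := by
    intro g
    exact (hmul2 α (fun y => η y * g y) hαL2 (hmemηg g)).congr
      (Filter.Eventually.of_forall fun y => by ring)
  obtain ⟨uL, huLcoe⟩ : ∃ uL : Lp ℝ 2 μ, ⇑uL =ᵐ[μ] fun _ => (1 : ℝ) :=
    ⟨(memLp_const (1 : ℝ)).toLp _, (memLp_const (1 : ℝ)).coeFn_toLp⟩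
  obtain ⟨vL, hvLcoe⟩ : ∃ vL : Lp ℝ 2 μ, ⇑vL =ᵐ[μ] α := ⟨hαL2.toLp α, hαL2.coeFn_toLp⟩
  have hrep : ∀ g : Lp ℝ 2 μ,
      T g = (∫ y, η y * g y ∂μ) • uL + (ε * ∫ y, α y * η y * g y ∂μ) • vL := by
    intro g
    have hcalc : ∀ x : ℝ, (∫ y, ((1 + ε * α x * α y) * η y) * g y ∂μ)
        = (∫ y, η y * g y ∂μ) + ε * α x * ∫ y, α y * η y * g y ∂μ := by
      intro x
      have e1 : (fun y => ((1 + ε * α x * α y) * η y) * g y)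
          =ᵐ[μ] fun y => η y * g y + ε * α x * (α y * η y * g y) :=
        Filter.Eventually.of_forall fun y => by ring
      rw [integral_congr_ae e1, integral_add (hint1 g) ((hint2 g).const_mul _),
        integral_const_mul _ _]
    have e2 : ⇑(T g) =ᵐ[μ]
        fun x => (∫ y, η y * g y ∂μ) + (ε * ∫ y, α y * η y * g y ∂μ) * α x := by
      refine (hT g).trans (Filter.Eventually.of_forall fun x => ?_)
      dsimp only
      rw [hcalc x]; ring
    have e3 : ⇑((∫ y, η y * g y ∂μ) • uL + (ε * ∫ y, α y * η y * g y ∂μ) • vL)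
        =ᵐ[μ] fun x => (∫ y, η y * g y ∂μ) + (ε * ∫ y, α y * η y * g y ∂μ) * α x := by
      filter_upwards [Lp.coeFn_add ((∫ y, η y * g y ∂μ) • uL)
          ((ε * ∫ y, α y * η y * g y ∂μ) • vL),
        Lp.coeFn_smul (∫ y, η y * g y ∂μ) uL,
        Lp.coeFn_smul (ε * ∫ y, α y * η y * g y ∂μ) vL, huLcoe, hvLcoe]
        with x e1 e2 e3 e4 e5
      rw [e1, Pi.add_apply, e2, e3, Pi.smul_apply, Pi.smul_apply, smul_eq_mul,
        smul_eq_mul, e4, e5]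
      ring
    exact Lp.ext (e2.trans e3.symm)
  have hcu : (∫ y, η y * uL y ∂μ) = A :=
    integral_congr_ae (by filter_upwards [huLcoe] with y h; rw [h, mul_one])
  have hcu2 : (∫ y, α y * η y * uL y ∂μ) = M :=
    integral_congr_ae (by filter_upwards [huLcoe] with y h; rw [h, mul_one])
  have hcv : (∫ y, η y * vL y ∂μ) = M :=
    integral_congr_ae (by filter_upwards [hvLcoe] with y h; rw [h]; ring)
  have hcv2 : (∫ y, α y * η y * vL y ∂μ) = B :=
    integral_congr_ae (by filter_upwards [hvLcoe] with y h; rw [h]; ring)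
  have hTu : T uL = A • uL + (ε * M) • vL := by rw [hrep uL, hcu, hcu2]
  have hTv : T vL = M • uL + (ε * B) • vL := by rw [hrep vL, hcv, hcv2]
  -- scalar inequalities
  have haes : ∀ᵐ x ∂μ, x ∈ Set.Ico (0 : ℝ) 1 := mem_ae_iff.mpr hsupp
  have hα2le : ∀ᵐ x ∂μ, α x ^ 2 * η x ≤ η x := by
    filter_upwards [haes] with x hx
    nlinarith [hαbd x hx, hη0 x]
  have hBA : B ≤ A := integral_mono_ae hα2η hηint hα2le
  have hA0 : 0 ≤ A := integral_nonneg hη0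
  have hB0 : 0 ≤ B := integral_nonneg fun x => mul_nonneg (sq_nonneg _) (hη0 x)
  have hexp : ∀ t : ℝ, (∫ x, (t * α x + 1) ^ 2 * η x ∂μ) = B * (t * t) + 2 * M * t + A := by
    intro t
    have e : (fun x => (t * α x + 1) ^ 2 * η x)
        =ᵐ[μ] fun x => t * t * (α x ^ 2 * η x) + (2 * t * (α x * η x) + η x) :=
      Filter.Eventually.of_forall fun x => by ring
    have h5 : Integrable (fun x => 2 * t * (α x * η x) + η x) μ := (hαη.const_mul _).add hηint
    rw [integral_congr_ae e, integral_add (hα2η.const_mul _) h5,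
      integral_add (hαη.const_mul _) hηint, integral_const_mul, integral_const_mul]
    ring
  have hq : ∀ t : ℝ, 0 ≤ B * (t * t) + 2 * M * t + A := by
    intro t
    rw [← hexp t]
    exact integral_nonneg fun x => mul_nonneg (sq_nonneg _) (hη0 x)
  have hdisc := discrim_le_zero hq
  rw [discrim] at hdisc
  have hM2 : M ^ 2 ≤ B * A := by nlinarith [hdisc]
  have hτ0 : 0 ≤ A + ε * B := by rcases hε with h | h <;> rw [h] <;> linarith
  have hD0 : 0 ≤ (A - ε * B) ^ 2 + 4 * ε * M ^ 2 := by
    rcases hε with h | h <;> rw [h] <;> nlinarith [sq_nonneg (A - B), sq_nonneg (A + B), sq_nonneg M]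
  set lam : ℝ := (A + ε * B + Real.sqrt ((A - ε * B) ^ 2 + 4 * ε * M ^ 2)) / 2 with hlamdef
  have hs2 : Real.sqrt ((A - ε * B) ^ 2 + 4 * ε * M ^ 2) ^ 2
      = (A - ε * B) ^ 2 + 4 * ε * M ^ 2 := Real.sq_sqrt hD0
  have hroot : lam ^ 2 - (A + ε * B) * lam + (ε * (A * B) - ε * M ^ 2) = 0 := by
    rw [hlamdef]; linear_combination (1 / 4 : ℝ) * hs2
  have hconst : ∀ c : ℝ, ((fun _ => c : ℝ → ℝ) =ᵐ[μ] fun _ => (0 : ℝ)) → c = 0 := by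
    intro c hc
    by_contra h0
    have h2 : ∀ᵐ _x ∂μ, False := by filter_upwards [hc] with x hx; exact h0 hx
    rw [ae_iff] at h2; simp [measure_univ] at h2
  have huLne : uL ≠ 0 := by
    intro h
    refine one_ne_zero (hconst 1 ?_)
    refine huLcoe.symm.trans ?_
    rw [h]
    exact Lp.coeFn_zero ℝ 2 μ
  have heig : ∃ w : Lp ℝ 2 μ, w ≠ 0 ∧ T w = lam • w := by
    by_cases hM0 : M = 0
    · refine ⟨uL, huLne, ?_⟩
      rw [hTu, hM0, mul_zero, zero_smul, add_zero]
      have hεBA : ε * B ≤ A := by rcases hε with h | h <;> rw [h] <;> linarith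
      have hlA : lam = A := by
        rw [hlamdef, hM0, show (4 : ℝ) * ε * 0 ^ 2 = 0 by ring, add_zero,
          Real.sqrt_sq_eq_abs, abs_of_nonneg (by linarith : (0:ℝ) ≤ A - ε * B)]
        ring
      rw [hlA]
    · refine ⟨M • uL + (lam - A) • vL, ?_, ?_⟩
      · intro h
        have hae : ∀ᵐ x ∂μ, M + (lam - A) * α x = 0 := by
          have h4 : ⇑(M • uL + (lam - A) • vL) =ᵐ[μ] ⇑(0 : Lp ℝ 2 μ) := by rw [h]
          filter_upwards [Lp.coeFn_add (M • uL) ((lam - A) • vL), Lp.coeFn_smul M uL,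
            Lp.coeFn_smul (lam - A) vL, huLcoe, hvLcoe, h4, Lp.coeFn_zero ℝ 2 μ]
            with x e1 e2 e3 e4 e5 e6 e7
          rw [e1, Pi.add_apply, e2, e3, Pi.smul_apply, Pi.smul_apply, smul_eq_mul,
            smul_eq_mul, e4, e5, e7, Pi.zero_apply] at e6
          linarith [e6]
        by_cases hc : lam - A = 0
        · refine hM0 (hconst M ?_)
          filter_upwards [hae] with x hx
          rw [hc] at hx; linarith
        · have hαc : α =ᵐ[μ] fun _ => -M / (lam - A) := by
            filter_upwards [hae] with x hx
            field_simp
            linarith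
          have hint : (∫ x, α x ∂μ) = -M / (lam - A) := by
            rw [integral_congr_ae hαc, integral_const]; simp
          rw [hαint] at hint
          rw [eq_comm, div_eq_zero_iff] at hint
          rcases hint with h' | h'
          · exact hM0 (by linarith [neg_eq_zero.1 h'])
          · exact hc h'
      · rw [map_add, T.map_smul, T.map_smul, hTu, hTv]
        have hc1 : M * A + (lam - A) * M = lam * M := by ring
        have hc2 : M * (ε * M) + (lam - A) * (ε * B) = lam * (lam - A) := by
          linear_combination -hroot
        have hcomb : M • (A • uL + (ε * M) • vL) + (lam - A) • (M • uL + (ε * B) • vL)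
            = (M * A + (lam - A) * M) • uL + (M * (ε * M) + (lam - A) * (ε * B)) • vL := by
          module
        rw [hcomb, hc1, hc2]
        module
  obtain ⟨w, hwne, hTw⟩ := heig
  have hrank : ∀ g : Lp ℝ 2 μ, ∃ a b : ℝ, T g = a • uL + b • vL := fun g => ⟨_, _, hrep g⟩
  have hfin := rank_two_spectralRadius T uL vL A B M ε lam hTu hTv hrank w hwne hTw hlamdef hτ0 hD0
  rw [rho, hfin, hlamdef]
  ring
end
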